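/- Let 0<p<∞ and φ∈𝒢_p with φ(1)=1. Assume there exist u>p and c>0 such that φ(t) ≤ c · t^{n/u} for all t>0. Then 𝔈_G ℳ_{φ,p}(ℝ^n)(t) = ∞ for every t>0. -/

import Mathlib

open MeasureTheory Filter Set ENNReal

noncomputable section

abbrev En (n : ℕ) := EuclideanSpace ℝ (Fin n)

/-- The class `𝒢_p`: nondecreasing positive functions on `(0,∞)` such that
`t ↦ φ(t) t^{-n/p}` is nonincreasing. -/
def GClass (n : ℕ) (p : ℝ) (φ : ℝ → ℝ) : Prop :=
  (∀ t : ℝ, 0 < t → 0 < φ t) ∧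
    ∀ t r : ℝ, 0 < t → t ≤ r → φ t ≤ φ r ∧ φ r ≤ φ t * (r / t) ^ ((n : ℝ) / p)

/-- The axis-parallel compact cube centred at `x` with side length `r`. -/
def cube (n : ℕ) (x : En n) (r : ℝ) : Set (En n) := {y | ∀ i, |y i - x i| ≤ r / 2}

/-- The generalised Morrey quasi-norm `‖f | ℳ_{φ,p}(ℝⁿ)‖`. -/
def morreyNorm {F : Type*} [NormedAddCommGroup F] (n : ℕ) (p : ℝ) (φ : ℝ → ℝ)
    (f : En n → F) : ℝ≥0∞ :=
  ⨆ (x : En n) (r : ℝ) (_ : 0 < r),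
    ENNReal.ofReal (φ r) *
      ((volume (cube n x r))⁻¹ *
        ∫⁻ y in cube n x r, ENNReal.ofReal (‖f y‖ ^ p)) ^ (1 / p)

/-- The decreasing rearrangement `f*(t) = inf{σ>0 : |{x : |f(x)|>σ}| ≤ t}`. -/
def rearr {F : Type*} [NormedAddCommGroup F] (n : ℕ) (f : En n → F) (t : ℝ) : ℝ≥0∞ :=
  sInf {σ : ℝ≥0∞ | 0 < σ ∧ volume {x : En n | σ < ENNReal.ofReal ‖f x‖} ≤ ENNReal.ofReal t}

/-- The growth envelope function of the generalised Morrey space `ℳ_{φ,p}(ℝⁿ)`. -/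
def morreyEnvelope (n : ℕ) (p : ℝ) (φ : ℝ → ℝ) (t : ℝ) : ℝ≥0∞ :=
  ⨆ (f : En n → ℝ) (_ : Measurable f) (_ : morreyNorm n p φ f ≤ 1), rearr n f t

end

section helpers
lemma volume_preimage_pi {n : ℕ} (A : Fin n → Set ℝ) (hA : ∀ i, MeasurableSet (A i)) :
    volume (((MeasurableEquiv.toLp 2 (Fin n → ℝ)).symm) ⁻¹' (univ.pi A)) = ∏ i, volume (A i) := by
  rw [(EuclideanSpace.volume_preserving_symm_measurableEquiv_toLp (Fin n)).measure_preimage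
    (MeasurableSet.univ_pi hA).nullMeasurableSet, volume_pi_pi]

lemma cube_eq_preimage (n : ℕ) (x : En n) (r : ℝ) :
    cube n x r = ((MeasurableEquiv.toLp 2 (Fin n → ℝ)).symm) ⁻¹'
      (univ.pi fun i => Icc (x i - r/2) (x i + r/2)) := by
  ext y
  simp only [cube, mem_setOf_eq, mem_preimage, Set.mem_pi, mem_univ, forall_true_left, mem_Icc,
    MeasurableEquiv.coe_toLp_symm, MeasurableEquiv.coe_mk, abs_le]
  constructor <;> intro h i <;> obtain ⟨h1, h2⟩ := h i <;> constructor <;> linarith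

lemma measurableSet_cube (n : ℕ) (x : En n) (r : ℝ) : MeasurableSet (cube n x r) := by
  rw [cube_eq_preimage]
  exact ((MeasurableEquiv.toLp 2 (Fin n → ℝ)).symm).measurable
    (MeasurableSet.univ_pi fun i => measurableSet_Icc)

lemma volume_cube (n : ℕ) (x : En n) (r : ℝ) (hr : 0 ≤ r) :
    volume (cube n x r) = ENNReal.ofReal (r ^ (n : ℕ)) := by
  rw [cube_eq_preimage, volume_preimage_pi _ fun i => measurableSet_Icc]
  have h : ∀ i : Fin n, volume (Icc (x i - r/2) (x i + r/2)) = ENNReal.ofReal r := by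
    intro i; rw [Real.volume_Icc]; congr 1; ring
  simp [h, Finset.prod_const, ← ENNReal.ofReal_pow hr]
end helpers

section oneD
open MeasureTheory Set
noncomputable def gridS (m : ℕ) (d s : ℝ) : Set ℝ :=
  ⋃ k ∈ Finset.range m, Icc (k*d - s/2) (k*d + s/2)

lemma measurableSet_gridS (m : ℕ) (d s : ℝ) : MeasurableSet (gridS m d s) :=
  (Finset.range m).measurableSet_biUnion fun _ _ => measurableSet_Icc

lemma volIcc (c s : ℝ) : volume (Icc (c - s/2) (c + s/2)) = ENNReal.ofReal s := by
  rw [Real.volume_Icc]; congr 1; ring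

lemma disjoint_Icc_of_lt {a b a' b' : ℝ} (h : b < a') : Disjoint (Icc a b) (Icc a' b') := by
  apply Set.disjoint_left.2
  intro y hy hy'
  exact absurd rfl (by have := hy.2; have := hy'.1; intro _; linarith : y = y → False)

lemma grid_pairwise (m : ℕ) {d s : ℝ} (hs : 0 < s) (hd : s + 1 ≤ d) :
    ∀ k ∈ Finset.range m, ∀ l ∈ Finset.range m, k ≠ l →
      Disjoint (Icc ((k:ℝ)*d - s/2) ((k:ℝ)*d + s/2)) (Icc ((l:ℝ)*d - s/2) ((l:ℝ)*d + s/2)) := by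
  have key : ∀ k l : ℕ, k < l → (k:ℝ)*d + s/2 < (l:ℝ)*d - s/2 := by
    intro k l h
    have h1 : (k:ℝ) + 1 ≤ l := by exact_mod_cast h
    have h0 : (0:ℝ) ≤ k := Nat.cast_nonneg k
    nlinarith
  intro k _ l _ hkl
  rcases lt_or_gt_of_ne hkl with h | h
  · exact disjoint_Icc_of_lt (key k l h)
  · exact (disjoint_Icc_of_lt (key l k h)).symm

lemma volume_gridS (m : ℕ) {d s : ℝ} (hs : 0 < s) (hd : s + 1 ≤ d) :
    volume (gridS m d s) = m * ENNReal.ofReal s := by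
  rw [gridS, measure_biUnion_finset (grid_pairwise m hs hd) fun _ _ => measurableSet_Icc]
  calc ∑ k ∈ Finset.range m, volume (Icc ((k:ℝ)*d - s/2) ((k:ℝ)*d + s/2))
      = ∑ _k ∈ Finset.range m, ENNReal.ofReal s :=
        Finset.sum_congr rfl (fun k _ => volIcc ((k:ℝ)*d) s)
    _ = m * ENNReal.ofReal s := by rw [Finset.sum_const, Finset.card_range, nsmul_eq_mul]

lemma card_filter_le (m : ℕ) {d A B : ℝ} (hd : 0 < d) (hAB : A ≤ B) :
    (((Finset.range m).filter (fun k : ℕ => A ≤ (k:ℝ)*d ∧ (k:ℝ)*d ≤ B)).card : ℝ) ≤ (B - A)/d + 1 := by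
  set T := (Finset.range m).filter (fun k : ℕ => A ≤ (k:ℝ)*d ∧ (k:ℝ)*d ≤ B) with hT
  rcases T.eq_empty_or_nonempty with h | h
  · rw [h]
    simp only [Finset.card_empty, Nat.cast_zero]
    have h0 : (0:ℝ) ≤ (B - A)/d := div_nonneg (by linarith) hd.le
    linarith
  · set k₀ := T.min' h with hk0
    have hk0T : k₀ ∈ T := T.min'_mem h
    have hk0P : A ≤ (k₀:ℝ)*d := (Finset.mem_filter.1 hk0T).2.1
    have hsub : T ⊆ Finset.Icc k₀ (k₀ + ⌊(B - A)/d⌋₊) := by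
      intro k hk
      have hk1 : k₀ ≤ k := T.min'_le k hk
      have hk2 : (k:ℝ)*d ≤ B := (Finset.mem_filter.1 hk).2.2
      have hc : ((k - k₀ : ℕ) : ℝ) ≤ (B - A)/d := by
        rw [le_div_iff₀ hd, Nat.cast_sub hk1]
        nlinarith
      have := Nat.le_floor hc
      exact Finset.mem_Icc.2 ⟨hk1, by omega⟩
    calc (T.card : ℝ) ≤ ((Finset.Icc k₀ (k₀ + ⌊(B - A)/d⌋₊)).card : ℝ) := by
          exact_mod_cast Finset.card_le_card hsub
      _ = (⌊(B - A)/d⌋₊ : ℝ) + 1 := by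
          rw [Nat.card_Icc, show k₀ + ⌊(B - A)/d⌋₊ + 1 - k₀ = ⌊(B - A)/d⌋₊ + 1 by omega]
          push_cast; ring
      _ ≤ (B - A)/d + 1 := by
          have h0 : (0:ℝ) ≤ (B - A)/d := div_nonneg (by linarith) hd.le
          linarith [Nat.floor_le h0]

lemma vol_inter_gridS_count {m : ℕ} {d s a b : ℝ} (hd : 0 < d) (hs : 0 < s) (hab : a ≤ b) :
    volume (Icc a b ∩ gridS m d s) ≤ ENNReal.ofReal (((b - a + s)/d + 1) * s) := by
  set T := (Finset.range m).filter (fun k : ℕ => a - s/2 ≤ (k:ℝ)*d ∧ (k:ℝ)*d ≤ b + s/2) with hT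
  have hsub : Icc a b ∩ gridS m d s ⊆ ⋃ k ∈ T, Icc ((k:ℝ)*d - s/2) ((k:ℝ)*d + s/2) := by
    rintro y ⟨hy1, hy2⟩
    simp only [gridS, mem_iUnion, exists_prop] at hy2 ⊢
    obtain ⟨k, hk, hyk⟩ := hy2
    refine ⟨k, Finset.mem_filter.2 ⟨hk, ?_, ?_⟩, hyk⟩
    · have := hy1.1; have := hyk.2; linarith
    · have := hy1.2; have := hyk.1; linarith
  calc volume (Icc a b ∩ gridS m d s)
      ≤ ∑ k ∈ T, volume (Icc ((k:ℝ)*d - s/2) ((k:ℝ)*d + s/2)) :=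
        (measure_mono hsub).trans (measure_biUnion_finset_le T _)
    _ = ∑ _k ∈ T, ENNReal.ofReal s := Finset.sum_congr rfl (fun k _ => volIcc ((k:ℝ)*d) s)
    _ = T.card * ENNReal.ofReal s := by rw [Finset.sum_const, nsmul_eq_mul]
    _ ≤ ENNReal.ofReal (((b - a + s)/d + 1)) * ENNReal.ofReal s := by
        gcongr
        rw [← ENNReal.ofReal_natCast]
        apply ENNReal.ofReal_le_ofReal
        have h := card_filter_le m hd (by linarith : a - s/2 ≤ b + s/2)
        calc (T.card : ℝ) ≤ (b + s/2 - (a - s/2))/d + 1 := h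
          _ = (b - a + s)/d + 1 := by ring_nf
    _ = ENNReal.ofReal (((b - a + s)/d + 1) * s) := by
        rw [← ENNReal.ofReal_mul (by
          have h3 : (0:ℝ) ≤ (b - a + s)/d := div_nonneg (by linarith) hd.le
          linarith)]

lemma vol_inter_gridS_card {m : ℕ} {d s : ℝ} (hs : 0 ≤ s) (a b : ℝ) :
    volume (Icc a b ∩ gridS m d s) ≤ ENNReal.ofReal (m * s) := by
  calc volume (Icc a b ∩ gridS m d s) ≤ volume (gridS m d s) :=
        measure_mono inter_subset_right
    _ ≤ ∑ k ∈ Finset.range m, volume (Icc ((k:ℝ)*d - s/2) ((k:ℝ)*d + s/2)) :=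
        measure_biUnion_finset_le _ _
    _ = ∑ _k ∈ Finset.range m, ENNReal.ofReal s :=
        Finset.sum_congr rfl (fun k _ => volIcc ((k:ℝ)*d) s)
    _ = m * ENNReal.ofReal s := by rw [Finset.sum_const, Finset.card_range, nsmul_eq_mul]
    _ = ENNReal.ofReal (m * s) := by
        rw [ENNReal.ofReal_mul (by positivity), ENNReal.ofReal_natCast]

lemma vol_inter_gridS {m : ℕ} {d s a b : ℝ} (hd : 0 < d) (hs : 0 < s) (hab : a ≤ b) :
    volume (Icc a b ∩ gridS m d s) ≤
      ENNReal.ofReal (min (b - a) (min (m*s) (((b - a + s)/d + 1) * s))) := by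
  rcases le_total (b-a) (min ((m:ℝ)*s) (((b - a + s)/d + 1) * s)) with h | h
  · rw [min_eq_left h]
    exact (measure_mono inter_subset_left).trans_eq Real.volume_Icc
  · rw [min_eq_right h]
    rcases le_total ((m:ℝ)*s) (((b - a + s)/d + 1) * s) with h2 | h2
    · rw [min_eq_left h2]; exact vol_inter_gridS_card hs.le a b
    · rw [min_eq_right h2]; exact vol_inter_gridS_count hd hs hab
end oneD

section keyineq
open Real
lemma key_ineq {n : ℕ} {p u c : ℝ} {φ : ℝ → ℝ} (hn : 0 < n) (hp : 0 < p) (hpu : p < u)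
    (hc : 0 < c)
    (hφpos : ∀ t : ℝ, 0 < t → 0 < φ t)
    (hφG : ∀ t r : ℝ, 0 < t → t ≤ r → φ t ≤ φ r ∧ φ r ≤ φ t * (r / t) ^ ((n : ℝ) / p))
    (hφu : ∀ t : ℝ, 0 < t → φ t ≤ c * t ^ ((n : ℝ) / u))
    {s : ℝ} (hs : 0 < s) {m : ℕ} (hm : 1 ≤ m) {d : ℝ} (hds : s + 1 ≤ d)
    {L : ℝ} (hL : L = (3:ℝ) ^ (-((n:ℝ)/p)) / φ s)
    (hd2 : c * L * 3 ^ ((n:ℝ)/p) * s ^ ((n:ℝ)/p) * (m:ℝ) ^ ((n:ℝ)/u) * d ^ ((n:ℝ)/u - (n:ℝ)/p) ≤ 1)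
    {r : ℝ} (hr : 0 < r) :
    φ r * (L * (min r (min ((m:ℝ)*s) (((r + s)/d + 1)*s))) ^ ((n:ℝ)/p)) ≤ r ^ ((n:ℝ)/p) := by
  set np := (n:ℝ)/p with hnp
  set nu := (n:ℝ)/u with hnu
  have hu0 : 0 < u := hp.trans hpu
  have hnp0 : 0 < np := by positivity
  have hnu0 : 0 < nu := by positivity
  have hnunp : nu < np := by
    apply div_lt_div_of_pos_left (by exact_mod_cast hn) hp hpu
  have hd0 : (0:ℝ) < d := by linarith
  have hφs : 0 < φ s := hφpos s hs
  have hL0 : 0 < L := by rw [hL]; positivity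
  set V := min r (min ((m:ℝ)*s) (((r + s)/d + 1)*s)) with hV
  have hm0 : (0:ℝ) < m := by exact_mod_cast hm
  have hV0 : 0 ≤ V := by
    apply le_min hr.le (le_min (by positivity) ?_)
    have h1 : (0:ℝ) ≤ (r+s)/d := by positivity
    positivity
  have h3L : φ s * L = 3 ^ (-np) := by
    rw [hL, mul_div_assoc']; field_simp
  have h31 : (3:ℝ) ^ (-np) ≤ 1 :=
    rpow_le_one_of_one_le_of_nonpos (by norm_num) (by linarith)
  rcases le_total r s with hcase1 | hcase1
  · -- r ≤ s
    have hVr : V ≤ r := min_le_left _ _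
    calc φ r * (L * V ^ np) ≤ φ s * (L * r ^ np) := by
          apply mul_le_mul (hφG r s hr hcase1).1 ?_ (by positivity) hφs.le
          exact mul_le_mul_of_nonneg_left (rpow_le_rpow hV0 hVr hnp0.le) hL0.le
      _ = (φ s * L) * r ^ np := by ring
      _ = 3 ^ (-np) * r ^ np := by rw [h3L]
      _ ≤ 1 * r ^ np := by gcongr
      _ = r ^ np := one_mul _
  rcases le_total r d with hcase2 | hcase2
  · -- s ≤ r ≤ d
    have hV3s : V ≤ 3 * s := by
      refine (min_le_right _ _).trans ((min_le_right _ _).trans ?_)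
      have h1 : (r+s)/d ≤ 2 := by
        rw [div_le_iff₀ hd0]; linarith
      nlinarith
    have hφr : φ r ≤ φ s * (r/s) ^ np := (hφG s r hs hcase1).2
    have key : φ s * (r/s) ^ np * (L * (3*s) ^ np) = (φ s * L) * 3 ^ np * ((r/s) ^ np * s ^ np) := by
      rw [mul_rpow (by norm_num) hs.le]; ring
    calc φ r * (L * V ^ np) ≤ (φ s * (r/s) ^ np) * (L * (3*s) ^ np) := by
          apply mul_le_mul hφr ?_ (by positivity) (by positivity)
          exact mul_le_mul_of_nonneg_left (rpow_le_rpow hV0 hV3s hnp0.le) hL0.le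
      _ = (φ s * L) * 3 ^ np * ((r/s) ^ np * s ^ np) := key
      _ = 3 ^ (-np) * 3 ^ np * ((r/s) ^ np * s ^ np) := by rw [h3L]
      _ = 1 * ((r/s) ^ np * s ^ np) := by rw [← rpow_add (by norm_num : (0:ℝ) < 3)]; norm_num
      _ = r ^ np / s ^ np * s ^ np := by rw [one_mul, div_rpow hr.le hs.le]
      _ = r ^ np := div_mul_cancel₀ _ (by positivity)
  -- d ≤ r
  have hφr : φ r ≤ c * r ^ nu := hφu r hr
  have hsd : s ≤ d := by linarith
  rcases le_total (3*r) ((m:ℝ)*d) with hcase3 | hcase3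
  · -- 3r ≤ md
    have hVb : V ≤ 3*r/d*s := by
      refine (min_le_right _ _).trans ((min_le_right _ _).trans ?_)
      have h1 : s/d ≤ 1 := by rw [div_le_one hd0]; linarith
      have h2 : (1:ℝ) ≤ r/d := by rw [le_div_iff₀ hd0]; linarith
      have h3 : (r+s)/d + 1 ≤ 3*r/d := by
        rw [add_div]
        have : r/d + 2 ≤ 3*(r/d) := by linarith
        calc r/d + s/d + 1 ≤ r/d + 2 := by linarith
          _ ≤ 3*(r/d) := this
          _ = 3*r/d := by ring
      nlinarith
    have hrmd : r ^ nu ≤ (m:ℝ) ^ nu * d ^ nu := by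
      calc r ^ nu ≤ ((m:ℝ)*d) ^ nu := by
            apply rpow_le_rpow hr.le ?_ hnu0.le
            nlinarith
        _ = (m:ℝ) ^ nu * d ^ nu := mul_rpow hm0.le hd0.le
    have hVnp : V ^ np ≤ (3*r/d*s) ^ np := rpow_le_rpow hV0 hVb hnp0.le
    have hexp : (3*r/d*s) ^ np = 3 ^ np * s ^ np * (r ^ np / d ^ np) := by
      rw [show 3*r/d*s = (3*s)*(r/d) by ring, mul_rpow (by positivity) (by positivity),
        mul_rpow (by norm_num) hs.le, div_rpow hr.le hd0.le]
    calc φ r * (L * V ^ np) ≤ (c * r ^ nu) * (L * (3*r/d*s) ^ np) := by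
          apply mul_le_mul hφr ?_ (by positivity) (by positivity)
          exact mul_le_mul_of_nonneg_left hVnp hL0.le
      _ = c * L * 3 ^ np * s ^ np * (r ^ nu / d ^ np) * r ^ np := by
          rw [hexp]; ring
      _ ≤ c * L * 3 ^ np * s ^ np * ((m:ℝ) ^ nu * d ^ nu / d ^ np) * r ^ np := by
          gcongr
      _ = (c * L * 3 ^ np * s ^ np * (m:ℝ) ^ nu * d ^ (nu - np)) * r ^ np := by
          rw [rpow_sub hd0]; ring
      _ ≤ 1 * r ^ np := by gcongr
      _ = r ^ np := one_mul _
  · -- md ≤ 3r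
    have hVb : V ≤ (m:ℝ)*s := (min_le_right _ _).trans (min_le_left _ _)
    have hmd3 : (0:ℝ) < (m:ℝ)*d/3 := by positivity
    have hrge : (m:ℝ)*d/3 ≤ r := by linarith
    have hre : r ^ (nu - np) ≤ ((m:ℝ)*d/3) ^ (nu - np) :=
      rpow_le_rpow_of_nonpos hmd3 hrge (by linarith)
    have hsplit : ((m:ℝ)*d/3) ^ (nu - np) = (m:ℝ) ^ (nu-np) * d ^ (nu-np) * 3 ^ (np-nu) := by
      rw [show (m:ℝ)*d/3 = (m:ℝ)*(d/3) by ring, mul_rpow hm0.le (by positivity),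
        div_rpow hd0.le (by norm_num), div_eq_mul_inv, ← rpow_neg (by norm_num : (0:ℝ) ≤ 3)]
      rw [show -(nu - np) = np - nu by ring]
      ring
    have hrnu : r ^ nu = r ^ (nu - np) * r ^ np := by
      rw [← rpow_add hr]; ring_nf
    calc φ r * (L * V ^ np) ≤ (c * r ^ nu) * (L * ((m:ℝ)*s) ^ np) := by
          apply mul_le_mul hφr ?_ (by positivity) (by positivity)
          exact mul_le_mul_of_nonneg_left (rpow_le_rpow hV0 hVb hnp0.le) hL0.le
      _ = c * L * ((m:ℝ) ^ np * s ^ np) * r ^ (nu - np) * r ^ np := by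
          rw [mul_rpow hm0.le hs.le, hrnu]; ring
      _ ≤ c * L * ((m:ℝ) ^ np * s ^ np) * ((m:ℝ) ^ (nu-np) * d ^ (nu-np) * 3 ^ (np-nu)) * r ^ np := by
          rw [← hsplit]; gcongr
      _ = c * L * 3 ^ (np-nu) * s ^ np * ((m:ℝ) ^ np * (m:ℝ) ^ (nu-np)) * d ^ (nu-np) * r ^ np := by
          ring
      _ = c * L * 3 ^ (np-nu) * s ^ np * (m:ℝ) ^ nu * d ^ (nu-np) * r ^ np := by
          rw [← rpow_add hm0]; ring_nf
      _ ≤ c * L * 3 ^ np * s ^ np * (m:ℝ) ^ nu * d ^ (nu-np) * r ^ np := by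
          gcongr
          · norm_num
          · linarith
      _ ≤ 1 * r ^ np := by gcongr
      _ = r ^ np := one_mul _
end keyineq

theorem statement2 (n : ℕ) (hn : 0 < n) (p : ℝ) (hp : 0 < p) (φ : ℝ → ℝ)
    (hφ : GClass n p φ) (hφ1 : φ 1 = 1)
    (hu : ∃ u c : ℝ, p < u ∧ 0 < c ∧ ∀ t : ℝ, 0 < t → φ t ≤ c * t ^ ((n : ℝ) / u)) :
    ∀ t : ℝ, 0 < t → morreyEnvelope n p φ t = ⊤ := by
  intro t ht
  obtain ⟨u, c, hpu, hc, hφu⟩ := hu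
  obtain ⟨hφpos, hφG⟩ := hφ
  refine ENNReal.eq_top_of_forall_nnreal_le fun M => ?_
  set np := (n:ℝ)/p with hnp
  set nu := (n:ℝ)/u with hnu
  have hu0 : 0 < u := hp.trans hpu
  have hnp0 : 0 < np := by positivity
  have hnu0 : 0 < nu := by positivity
  have hnunp : nu < np := div_lt_div_of_pos_left (by exact_mod_cast hn) hp hpu
  -- choose s
  set X := (3:ℝ)^(-np)/(c*((M:ℝ)+1)) with hX
  have hX0 : 0 < X := by positivity
  set s := min 1 (X ^ (1/nu)) with hs_def
  have hs0 : 0 < s := lt_min one_pos (Real.rpow_pos_of_pos hX0 _)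
  have hφs : 0 < φ s := hφpos s hs0
  set L := (3:ℝ)^(-np)/φ s with hL_def
  have hL0 : 0 < L := by positivity
  have hLM : (M:ℝ) ≤ L := by
    have h1 : s ^ nu ≤ X := by
      calc s ^ nu ≤ (X ^ (1/nu)) ^ nu :=
            Real.rpow_le_rpow hs0.le (min_le_right _ _) hnu0.le
        _ = X ^ ((1/nu) * nu) := (Real.rpow_mul hX0.le _ _).symm
        _ = X := by rw [one_div, inv_mul_cancel₀ hnu0.ne', Real.rpow_one]
    have h2 : φ s ≤ (3:ℝ)^(-np)/((M:ℝ)+1) := by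
      calc φ s ≤ c * s ^ nu := hφu s hs0
        _ ≤ c * X := by gcongr
        _ = (3:ℝ)^(-np)/((M:ℝ)+1) := by rw [hX]; field_simp
    have h3 : ((M:ℝ)+1) * φ s ≤ (3:ℝ)^(-np) := by
      calc ((M:ℝ)+1) * φ s ≤ ((M:ℝ)+1) * ((3:ℝ)^(-np)/((M:ℝ)+1)) := by gcongr
        _ = (3:ℝ)^(-np) := by field_simp
    have h4 : (M:ℝ)+1 ≤ L := by
      rw [hL_def, le_div_iff₀ hφs]; exact h3
    linarith
  -- choose m
  set m := ⌈(max 1 t + 1)/s⌉₊ with hm_def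
  have hm1 : 1 ≤ m := by
    rw [hm_def]
    exact Nat.one_le_ceil_iff.2 (by positivity)
  have hms : max 1 t + 1 ≤ m * s := by
    rw [← div_le_iff₀ hs0]
    exact Nat.le_ceil _
  have hms1 : 1 ≤ (m:ℝ) * s := by
    have := le_max_left (1:ℝ) t; linarith
  -- choose d
  set A := c * L * (3:ℝ)^np * s^np * (m:ℝ)^nu with hA
  have hm0 : (0:ℝ) < m := by exact_mod_cast hm1
  have hA0 : 0 < A := by positivity
  set ε := np - nu with hε
  have hε0 : 0 < ε := by simp only [hε]; linarith
  set d := max (s+1) ((max A 1) ^ (1/ε)) with hd_def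
  have hds : s + 1 ≤ d := le_max_left _ _
  have hd0 : 0 < d := by linarith
  have hdε : A ≤ d ^ ε := by
    have h1 : (max A 1) ^ (1/ε) ≤ d := le_max_right _ _
    have h2 : ((max A 1) ^ (1/ε)) ^ ε ≤ d ^ ε :=
      Real.rpow_le_rpow (by positivity) h1 hε0.le
    have h3 : ((max A 1) ^ (1/ε)) ^ ε = max A 1 := by
      rw [← Real.rpow_mul (by positivity), one_div, inv_mul_cancel₀ hε0.ne', Real.rpow_one]
    calc A ≤ max A 1 := le_max_left _ _
      _ = ((max A 1) ^ (1/ε)) ^ ε := h3.symm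
      _ ≤ d ^ ε := h2
  have hd2 : A * d ^ (nu - np) ≤ 1 := by
    have hdε0 : 0 < d ^ ε := Real.rpow_pos_of_pos hd0 _
    rw [show nu - np = -ε by rw [hε]; ring, Real.rpow_neg hd0.le, ← div_eq_mul_inv,
      div_le_one hdε0]
    exact hdε
  -- the function
  set U := ((MeasurableEquiv.toLp 2 (Fin n → ℝ)).symm) ⁻¹'
    (univ.pi fun _ : Fin n => gridS m d s) with hU_def
  have hUmeas : MeasurableSet U :=
    ((MeasurableEquiv.toLp 2 (Fin n → ℝ)).symm).measurable
      (MeasurableSet.univ_pi fun _ => measurableSet_gridS m d s)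
  set f : En n → ℝ := U.indicator (fun _ => L) with hf_def
  have hfmeas : Measurable f := measurable_const.indicator hUmeas
  -- volume of U
  have hvolU : volume U = ENNReal.ofReal (((m:ℝ)*s) ^ (n:ℕ)) := by
    rw [hU_def, volume_preimage_pi _ fun _ => measurableSet_gridS m d s]
    have h1 : (m : ℝ≥0∞) * ENNReal.ofReal s = ENNReal.ofReal ((m:ℝ) * s) := by
      rw [ENNReal.ofReal_mul (by positivity), ENNReal.ofReal_natCast]
    simp only [volume_gridS m hs0 hds, h1, Finset.prod_const, Finset.card_univ,
      Fintype.card_fin]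
    rw [← ENNReal.ofReal_pow (by positivity)]
  have hUt : ENNReal.ofReal t < volume U := by
    rw [hvolU]
    have h1 : (m:ℝ)*s ≤ ((m:ℝ)*s) ^ (n:ℕ) := le_self_pow₀ hms1 hn.ne'
    have h2 : t < ((m:ℝ)*s) ^ (n:ℕ) := by
      have := le_max_right (1:ℝ) t; linarith
    exact ENNReal.ofReal_lt_ofReal_iff (by linarith) |>.2 h2
  -- norm bound
  have hnorm : morreyNorm n p φ f ≤ 1 := by
    simp only [morreyNorm]
    refine iSup_le fun x => iSup_le fun r => iSup_le fun hr => ?_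
    set W := min r (min ((m:ℝ)*s) (((r + s)/d + 1)*s)) with hW
    have hW0 : 0 ≤ W := by
      apply le_min hr.le (le_min (by positivity) ?_)
      have h1 : (0:ℝ) ≤ (r+s)/d := by positivity
      positivity
    -- integral
    have hint : (∫⁻ y in cube n x r, ENNReal.ofReal (‖f y‖ ^ p))
        = ENNReal.ofReal (L ^ p) * volume (U ∩ cube n x r) := by
      have hfun : ∀ y, ENNReal.ofReal (‖f y‖ ^ p)
          = U.indicator (fun _ => ENNReal.ofReal (L ^ p)) y := by
        intro y
        rw [hf_def]
        by_cases hy : y ∈ U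
        · simp [Set.indicator_of_mem hy, Real.norm_eq_abs, abs_of_pos hL0]
        · simp [Set.indicator_of_notMem hy, Real.zero_rpow hp.ne']
      simp_rw [hfun]
      rw [lintegral_indicator hUmeas, setLIntegral_const, Measure.restrict_apply hUmeas]
    -- volume of intersection
    have hUQ : volume (U ∩ cube n x r) ≤ ENNReal.ofReal (W ^ (n:ℕ)) := by
      have key_i : ∀ z : ℝ, volume (gridS m d s ∩ Icc (z - r/2) (z + r/2))
          ≤ ENNReal.ofReal W := by
        intro z
        rw [inter_comm]
        have h := vol_inter_gridS (m := m) (d := d) (s := s) (a := z - r/2) (b := z + r/2)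
          hd0 hs0 (by linarith)
        have e : z + r/2 - (z - r/2) = r := by ring
        rw [e] at h
        exact h
      rw [hU_def, cube_eq_preimage, ← Set.preimage_inter, ← Set.pi_inter_distrib,
        volume_preimage_pi _ fun i => (measurableSet_gridS m d s).inter measurableSet_Icc]
      calc ∏ i, volume (gridS m d s ∩ Icc (x i - r/2) (x i + r/2))
          ≤ ∏ _i : Fin n, ENNReal.ofReal W :=
            Finset.prod_le_prod' fun i _ => key_i (x i)
        _ = (ENNReal.ofReal W) ^ (n:ℕ) := by
            rw [Finset.prod_const, Finset.card_univ, Fintype.card_fin]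
        _ = ENNReal.ofReal (W ^ (n:ℕ)) := (ENNReal.ofReal_pow hW0 n).symm
    -- real inequality
    have hreal : φ r * ((r ^ (n:ℕ))⁻¹ * (L ^ p * W ^ (n:ℕ))) ^ (1/p) ≤ 1 := by
      have hkey := key_ineq hn hp hpu hc hφpos hφG hφu hs0 hm1 hds hL_def
        (by rw [← hnp, ← hnu, ← hA]; exact hd2) hr
      rw [← hnp] at hkey
      have hWn : (W ^ (n:ℕ) : ℝ) = W ^ ((n:ℝ)) := (Real.rpow_natCast W n).symm
      have hrn : (r ^ (n:ℕ) : ℝ) = r ^ ((n:ℝ)) := (Real.rpow_natCast r n).symm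
      have hstep : ((r ^ ((n:ℝ)))⁻¹ * (L ^ p * W ^ ((n:ℝ)))) ^ (1/p)
          = (r ^ np)⁻¹ * (L * W ^ np) := by
        rw [← Real.rpow_neg hr.le,
          Real.mul_rpow (by positivity) (by positivity),
          Real.mul_rpow (by positivity) (by positivity),
          ← Real.rpow_mul hr.le, ← Real.rpow_mul hL0.le, ← Real.rpow_mul hW0,
          show -(n:ℝ) * (1/p) = -np by rw [hnp]; ring,
          show p * (1/p) = 1 by field_simp,
          show (n:ℝ) * (1/p) = np by rw [hnp]; ring,
          Real.rpow_one, Real.rpow_neg hr.le]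
      rw [hWn, hrn, hstep, show φ r * ((r ^ np)⁻¹ * (L * W ^ np))
          = (φ r * (L * W ^ np)) / r ^ np by rw [div_eq_mul_inv]; ring,
        div_le_one (Real.rpow_pos_of_pos hr np)]
      exact hkey
    -- assemble
    calc ENNReal.ofReal (φ r) *
          ((volume (cube n x r))⁻¹ * ∫⁻ y in cube n x r, ENNReal.ofReal (‖f y‖ ^ p)) ^ (1/p)
        ≤ ENNReal.ofReal (φ r) *
          ((ENNReal.ofReal (r ^ (n:ℕ)))⁻¹ *
            (ENNReal.ofReal (L ^ p) * ENNReal.ofReal (W ^ (n:ℕ)))) ^ (1/p) := by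
          rw [hint, volume_cube n x r hr.le]
          gcongr
      _ = ENNReal.ofReal (φ r) *
          (ENNReal.ofReal ((r ^ (n:ℕ))⁻¹ * (L ^ p * W ^ (n:ℕ)))) ^ (1/p) := by
          rw [← ENNReal.ofReal_inv_of_pos (pow_pos hr n),
            ← ENNReal.ofReal_mul (by positivity),
            ← ENNReal.ofReal_mul (by positivity)]
      _ = ENNReal.ofReal (φ r * ((r ^ (n:ℕ))⁻¹ * (L ^ p * W ^ (n:ℕ))) ^ (1/p)) := by
          rw [ENNReal.ofReal_rpow_of_nonneg (by positivity) (by positivity),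
            ← ENNReal.ofReal_mul (hφpos r hr).le]
      _ ≤ 1 := ENNReal.ofReal_le_one.2 hreal
  -- rearrangement bound
  have hre : ENNReal.ofReal L ≤ rearr n f t := by
    rw [rearr]
    refine le_sInf fun σ hσ => ?_
    obtain ⟨hσ0, hσvol⟩ := hσ
    by_contra hcon
    push_neg at hcon
    have hsub : U ⊆ {x : En n | σ < ENNReal.ofReal ‖f x‖} := by
      intro y hy
      simp only [mem_setOf_eq, hf_def, Set.indicator_of_mem hy, Real.norm_eq_abs,
        abs_of_pos hL0]
      exact hcon
    exact absurd (le_trans (measure_mono hsub) hσvol) (not_le.2 hUt)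
  -- conclude
  calc (M : ℝ≥0∞) = ENNReal.ofReal (M:ℝ) := (ENNReal.ofReal_coe_nnreal).symm
    _ ≤ ENNReal.ofReal L := ENNReal.ofReal_le_ofReal hLM
    _ ≤ rearr n f t := hre
    _ ≤ morreyEnvelope n p φ t :=
        le_iSup_of_le f (le_iSup_of_le hfmeas (le_iSup_of_le hnorm le_rfl))
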